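/- Let P and Q be finite posets on [d]. The origin of ℝ^d belongs to the interior of the twinned order polytope Δ(P,−Q) if and only if P and Q possess a common linear extension. -/

import Mathlib

/-- A poset ideal (down-set) of a partial order `P` on `Fin d`. -/
def IsIdeal {d : ℕ} (P : PartialOrder (Fin d)) (I : Set (Fin d)) : Prop :=
  ∀ ⦃i j : Fin d⦄, i ∈ I → P.le j i → j ∈ I

/-- The indicator vector `ρ(I) = Σ_{i ∈ I} e_i` of a subset of `[d]`. -/
noncomputable def rho {d : ℕ} (I : Set (Fin d)) : Fin d → ℝ := I.indicator 1

/-- `σ` is a linear extension of `P`: if `p_{σ a} < p_{σ b}` in `P` then `a < b`. -/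
def IsLinExt {d : ℕ} (P : PartialOrder (Fin d)) (σ : Equiv.Perm (Fin d)) : Prop :=
  ∀ a b : Fin d, P.lt (σ a) (σ b) → a < b

/-- `Ω(P, -Q)`. -/
noncomputable def Omega {d : ℕ} (P Q : PartialOrder (Fin d)) : Set (Fin d → ℝ) :=
  {v | ∃ I : Set (Fin d), IsIdeal P I ∧ I.Nonempty ∧ v = rho I} ∪
  {v | ∃ J : Set (Fin d), IsIdeal Q J ∧ J.Nonempty ∧ v = - rho J} ∪ {0}


lemma plt_irrefl {d : ℕ} (P : PartialOrder (Fin d)) (a : Fin d) : ¬ P.lt a a := fun h => by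
  have h' := (P.lt_iff_le_not_ge a a).mp h
  exact h'.2 h'.1

lemma ple_of_lt {d : ℕ} (P : PartialOrder (Fin d)) {a b : Fin d} (h : P.lt a b) : P.le a b :=
  ((P.lt_iff_le_not_ge a b).mp h).1

lemma plt_trans {d : ℕ} (P : PartialOrder (Fin d)) {a b c : Fin d}
    (h1 : P.lt a b) (h2 : P.lt b c) : P.lt a c := by
  obtain ⟨hab, hnba⟩ := (P.lt_iff_le_not_ge a b).mp h1
  obtain ⟨hbc, hncb⟩ := (P.lt_iff_le_not_ge b c).mp h2
  exact (P.lt_iff_le_not_ge a c).mpr ⟨P.le_trans _ _ _ hab hbc,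
    fun hca => hncb (P.le_trans _ _ _ hca hab)⟩

lemma transGen_to_chain {α : Type*} {r : α → α → Prop} {a b : α}
    (h : Relation.TransGen r a b) :
    ∃ (m : ℕ) (x : ℕ → α), 0 < m ∧ x 0 = a ∧ x m = b ∧ ∀ k < m, r (x k) (x (k + 1)) := by
  induction h with
  | @single c hac =>
      refine ⟨1, fun k => if k = 0 then a else c, one_pos, by simp, by simp, ?_⟩
      intro k hk
      interval_cases k
      simpa using hac
  | @tail c e hac hce ih =>
      obtain ⟨m, x, hm, h0, hmb, hstep⟩ := ih
      refine ⟨m + 1, fun k => if k = m + 1 then e else x k, Nat.succ_pos _, ?_, by simp, ?_⟩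
      · simp only [if_neg (by omega : ¬ 0 = m + 1)]; exact h0
      · intro k hk
        rcases Nat.lt_or_ge k m with hkm | hkm
        · simp only [if_neg (by omega : ¬ k = m + 1), if_neg (by omega : ¬ k + 1 = m + 1)]
          exact hstep k hkm
        · have hkm' : k = m := by omega
          subst hkm'
          simp only [if_neg (by omega : ¬ k = k + 1), if_pos rfl]
          rw [hmb]; exact hce


open Finset

lemma sum_pm_nonneg {m : ℕ} (p : ℕ → Prop) [DecidablePred p] (χ : ℕ → ℝ)
    (hχ : ∀ k, χ k = 0 ∨ χ k = 1) (g : ℕ → ℕ)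
    (hg : ∀ k ∈ Finset.range m, ¬ p k → χ k = 1 →
      g k ∈ Finset.range m ∧ p (g k) ∧ χ (g k) = 1)
    (hinj : Set.InjOn g (Finset.range m)) :
    0 ≤ ∑ k ∈ Finset.range m, (if p k then (1:ℝ) else -1) * χ k := by
  classical
  have hsplit : ∑ k ∈ Finset.range m, (if p k then (1:ℝ) else -1) * χ k
      = (∑ k ∈ (Finset.range m).filter p, χ k)
        - ∑ k ∈ (Finset.range m).filter (fun k => ¬ p k), χ k := by
    rw [← Finset.sum_filter_add_sum_filter_not (Finset.range m) p]
    rw [sub_eq_add_neg, ← Finset.sum_neg_distrib]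
    congr 1
    · exact Finset.sum_congr rfl fun k hk => by
        rw [if_pos (Finset.mem_filter.mp hk).2, one_mul]
    · exact Finset.sum_congr rfl fun k hk => by
        rw [if_neg (Finset.mem_filter.mp hk).2, neg_one_mul]
  rw [hsplit, sub_nonneg]
  have hcount : ∀ s : Finset ℕ, ∑ k ∈ s, χ k = (s.filter (fun k => χ k = 1)).card := by
    intro s
    rw [← Finset.sum_boole]
    exact Finset.sum_congr rfl fun k _ => by
      rcases hχ k with h | h <;> simp [h]
  rw [hcount, hcount, Nat.cast_le]
  apply Finset.card_le_card_of_injOn g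
  · intro k hk
    simp only [Finset.mem_coe, Finset.mem_filter] at hk ⊢
    obtain ⟨⟨hk1, hk2⟩, hk3⟩ := hk
    obtain ⟨h1, h2, h3⟩ := hg k hk1 hk2 hk3
    exact ⟨⟨h1, h2⟩, h3⟩
  · intro a ha b hb hab
    have ha' := Finset.mem_filter.mp ha
    have hb' := Finset.mem_filter.mp hb
    exact hinj (Finset.mem_coe.mpr (Finset.mem_filter.mp ha'.1).1)
      (Finset.mem_coe.mpr (Finset.mem_filter.mp hb'.1).1) hab

lemma exists_common_linext {d : ℕ} (P Q : PartialOrder (Fin d))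
    (h : ∀ i : Fin d, ¬ Relation.TransGen (fun a b => P.lt a b ∨ Q.lt a b) i i) :
    ∃ σ : Equiv.Perm (Fin d), IsLinExt P σ ∧ IsLinExt Q σ := by
  classical
  set R : Fin d → Fin d → Prop := fun a b => P.lt a b ∨ Q.lt a b with hR
  let T : Fin d → Fin d → Prop := Relation.TransGen R
  have hTtrans : ∀ {a b c}, T a b → T b c → T a c := fun hab hbc => hab.trans hbc
  let le' : Fin d → Fin d → Prop := fun a b => a = b ∨ T a b
  haveI : IsPartialOrder (Fin d) le' :=
    { refl := fun a => Or.inl rfl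
      trans := by
        rintro a b c (rfl | hab) (rfl | hbc)
        · exact Or.inl rfl
        · exact Or.inr hbc
        · exact Or.inr hab
        · exact Or.inr (hTtrans hab hbc)
      antisymm := by
        rintro a b (rfl | hab) h2
        · rfl
        · rcases h2 with rfl | hba
          · rfl
          · exact absurd (hTtrans hab hba) (h a) }
  obtain ⟨s, hs, hles⟩ := extend_partialOrder le'
  haveI : IsTrans (Fin d) s := hs.toIsPartialOrder.toIsPreorder.toIsTrans
  haveI : IsAntisymm (Fin d) s := by haveI := hs; infer_instance
  haveI : IsTotal (Fin d) s := by haveI := hs; infer_instance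
  haveI : DecidableRel s := Classical.decRel s
  let l : List (Fin d) := Finset.univ.sort s
  have hlen : l.length = d := by
    simp [l, Finset.length_sort]
  have hnd : l.Nodup := Finset.sort_nodup (s := Finset.univ) (r := s)
  have hsorted : l.Pairwise s := Finset.pairwise_sort (s := Finset.univ) (r := s)
  let g : Fin d → Fin d := fun a => l.get (Fin.cast hlen.symm a)
  have hginj : Function.Injective g := by
    intro a b hab
    have := List.nodup_iff_injective_get.mp hnd hab
    simpa [Fin.ext_iff] using this
  let σ : Equiv.Perm (Fin d) := Equiv.ofBijective g
    ((Finite.injective_iff_bijective).mp hginj)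
  have hσ : ∀ a, σ a = g a := fun a => rfl
  have key : ∀ a b : Fin d, R (σ a) (σ b) → a < b := by
    intro a b hab
    have hTs : s (σ a) (σ b) := hles _ _ (Or.inr (Relation.TransGen.single hab))
    have hne : σ a ≠ σ b := by
      rintro hEq
      rw [hEq] at hab
      rcases hab with h' | h'
      · exact plt_irrefl P _ h'
      · exact plt_irrefl Q _ h'
    by_contra hab'
    have hab'' : ¬ (a : ℕ) < (b : ℕ) := fun hh => hab' (Fin.lt_def.mpr hh)
    rcases Nat.eq_or_lt_of_le (Nat.le_of_not_lt hab'') with hba | hba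
    · exact hne (congrArg σ (Fin.ext hba.symm))
    · have : s (σ b) (σ a) := by
        have := hsorted.rel_get_of_lt
          (a := Fin.cast hlen.symm b) (b := Fin.cast hlen.symm a)
          (by rw [Fin.lt_def, Fin.coe_cast, Fin.coe_cast]; exact hba)
        exact this
      exact hne (Std.Antisymm.antisymm _ _ hTs this)
  exact ⟨σ, fun a b hab => key a b (Or.inl hab), fun a b hab => key a b (Or.inr hab)⟩

lemma mem_interior_of_linext {d : ℕ} (P Q : PartialOrder (Fin d)) (σ : Equiv.Perm (Fin d))
    (hP : IsLinExt P σ) (hQ : IsLinExt Q σ) :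
    (0 : Fin d → ℝ) ∈ interior (convexHull ℝ (Omega P Q)) := by
  classical
  let A : Fin d → Set (Fin d) := fun k => {i | (σ.symm i : ℕ) ≤ (k : ℕ)}
  have hIdeal : ∀ (O : PartialOrder (Fin d)), IsLinExt O σ → ∀ k, IsIdeal O (A k) := by
    intro O hO k i j hi hji
    rcases eq_or_ne j i with rfl | hne
    · exact hi
    · have hlt : O.lt j i := (O.lt_iff_le_not_ge j i).mpr
        ⟨hji, fun h2 => hne (O.le_antisymm j i hji h2)⟩
    -- translate to indices
      have hlt' : O.lt (σ (σ.symm j)) (σ (σ.symm i)) := by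
        rwa [Equiv.apply_symm_apply, Equiv.apply_symm_apply]
      have := hO _ _ hlt'
      have hik : (σ.symm i : ℕ) ≤ (k : ℕ) := hi
      exact le_trans (le_of_lt (Fin.lt_def.mp this)) hik
  have hAne : ∀ k : Fin d, (A k).Nonempty := fun k => ⟨σ k, by simp [A]⟩
  let S : Set (Fin d → ℝ) :=
    {v | (∃ k, v = rho (A k)) ∨ (∃ k, v = - rho (A k)) ∨ v = 0}
  have hsub : S ⊆ Omega P Q := by
    rintro v (⟨k, rfl⟩ | ⟨k, rfl⟩ | rfl)
    · exact Set.mem_union_left _ (Set.mem_union_left _ ⟨A k, hIdeal P hP k, hAne k, rfl⟩)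
    · exact Set.mem_union_left _ (Set.mem_union_right _ ⟨A k, hIdeal Q hQ k, hAne k, rfl⟩)
    · exact Set.mem_union_right _ rfl
  have hS0 : (0 : Fin d → ℝ) ∈ S := Or.inr (Or.inr rfl)
  have hneg : ∀ v ∈ S, -v ∈ S := by
    rintro v (⟨k, rfl⟩ | ⟨k, rfl⟩ | rfl)
    · exact Or.inr (Or.inl ⟨k, rfl⟩)
    · exact Or.inl ⟨k, by rw [neg_neg]⟩
    · exact Or.inr (Or.inr (by rw [neg_zero]))
  -- affine span is everything
  have hrhomem : ∀ k : Fin d, rho (A k) ∈ vectorSpan ℝ S := by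
    intro k
    have h1 : rho (A k) ∈ S := Or.inl ⟨k, rfl⟩
    have := vsub_mem_vectorSpan ℝ h1 hS0
    simpa using this
  have hiff : ∀ (k : Fin d) (j : Fin d), (j = σ k) ↔ ((σ.symm j : ℕ) = (k : ℕ)) := by
    intro k j
    rw [← Equiv.symm_apply_eq, Fin.ext_iff]
  have hsingle : ∀ i : Fin d, Pi.single i (1:ℝ) ∈ vectorSpan ℝ S := by
    intro i
    obtain ⟨k, rfl⟩ : ∃ k, σ k = i := ⟨σ.symm i, Equiv.apply_symm_apply σ i⟩
    rcases Nat.eq_zero_or_pos (k : ℕ) with hk0 | hkpos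
    · have : Pi.single (σ k) (1:ℝ) = rho (A k) := by
        funext j
        rw [Pi.single_apply, rho, Set.indicator_apply]
        by_cases hj : j = σ k
        · rw [if_pos hj, if_pos (show j ∈ A k from le_of_eq ((hiff k j).mp hj)),
            Pi.one_apply]
        · rw [if_neg hj, if_neg (show ¬ j ∈ A k from fun hc => by
            have hc' : (σ.symm j : ℕ) ≤ (k : ℕ) := hc
            exact hj ((hiff k j).mpr (by omega)))]
      rw [this]; exact hrhomem k
    · have hk' : (k : ℕ) - 1 < d := by omega
      set k' : Fin d := ⟨(k : ℕ) - 1, hk'⟩ with hk'def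
      have : Pi.single (σ k) (1:ℝ) = rho (A k) - rho (A k') := by
        funext j
        rw [Pi.sub_apply, Pi.single_apply]
        simp only [rho, Set.indicator_apply, A, Set.mem_setOf_eq, Pi.one_apply, hk'def]
        simp only [hiff k j]
        split_ifs <;> (try norm_num) <;> omega
      rw [this]
      exact Submodule.sub_mem _ (hrhomem k) (hrhomem k')
  have hspan : affineSpan ℝ S = ⊤ := by
    rw [AffineSubspace.affineSpan_eq_top_iff_vectorSpan_eq_top_of_nonempty ℝ (Fin d → ℝ) (Fin d → ℝ) ⟨0, hS0⟩]
    rw [eq_top_iff]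
    intro v _
    have hv : v = ∑ i : Fin d, v i • (Pi.single i (1:ℝ) : Fin d → ℝ) := by
      funext j
      rw [Finset.sum_apply]
      simp [Pi.single_apply]
    rw [hv]
    exact Submodule.sum_mem _ fun i _ => Submodule.smul_mem _ _ (hsingle i)
  -- 0 in interior
  have hne2 : (interior (convexHull ℝ S)).Nonempty := by
    rw [interior_convexHull_nonempty_iff_affineSpan_eq_top]
    exact hspan
  obtain ⟨w, hw⟩ := hne2
  have hSneg : -S = S := by
    ext v
    constructor
    · intro hv
      have : -v ∈ S := Set.mem_neg.mp hv
      simpa using hneg _ this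
    · intro hv
      exact Set.mem_neg.mpr (hneg _ hv)
  have hintneg : ∀ s : Set (Fin d → ℝ), interior (-s) = -interior s := by
    intro s
    have h := (Homeomorph.neg (Fin d → ℝ)).image_interior (s := s)
    have hc : ⇑(Homeomorph.neg (Fin d → ℝ)) = fun x => -x := rfl
    rw [hc] at h
    simp only [Set.image_neg_eq_neg] at h
    exact h.symm
  have hwneg : -w ∈ interior (convexHull ℝ S) := by
    have h2 : interior (convexHull ℝ S) = - interior (convexHull ℝ S) := by
      conv_lhs => rw [← hSneg, convexHull_neg, hintneg]
    rw [h2] at hw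
    simpa using hw
  have hzero : (0 : Fin d → ℝ) ∈ interior (convexHull ℝ S) := by
    have hconv : Convex ℝ (interior (convexHull ℝ S)) := (convex_convexHull ℝ S).interior
    have := hconv hw hwneg (by norm_num : (0:ℝ) ≤ 1/2) (by norm_num : (0:ℝ) ≤ 1/2) (by norm_num)
    simpa [smul_neg] using this
  exact interior_mono (convexHull_mono hsub) hzero

lemma not_mem_interior_of_cycle {d : ℕ} (P Q : PartialOrder (Fin d)) (i0 : Fin d)
    (h : Relation.TransGen (fun a b => P.lt a b ∨ Q.lt a b) i0 i0) :
    (0 : Fin d → ℝ) ∉ interior (convexHull ℝ (Omega P Q)) := by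
  classical
  set R : Fin d → Fin d → Prop := fun a b => P.lt a b ∨ Q.lt a b with hRdef
  have hcyc : ∃ m : ℕ, 0 < m ∧ ∃ x : ℕ → Fin d, x m = x 0 ∧ ∀ k < m, R (x k) (x (k+1)) := by
    obtain ⟨m, x, hm, h0, hmb, hstep⟩ := transGen_to_chain h
    exact ⟨m, hm, x, by rw [hmb, h0], hstep⟩
  set m := Nat.find hcyc with hmdef
  obtain ⟨hm, x, hxm, hstep⟩ := Nat.find_spec hcyc
  have hmin : ∀ m', m' < m →
      ¬(0 < m' ∧ ∃ y : ℕ → Fin d, y m' = y 0 ∧ ∀ k < m', R (y k) (y (k+1))) :=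
    fun m' hm' => Nat.find_min hcyc hm'
  have hm2 : 2 ≤ m := by
    by_contra hlt
    have hm1 : m = 1 := by omega
    have h1 := hstep 0 (by omega)
    rw [show (0:ℕ)+1 = m from by omega, hxm] at h1
    rcases h1 with h' | h'
    · exact plt_irrefl P _ h'
    · exact plt_irrefl Q _ h'
  have hinj : ∀ i j, i < m → j < m → x i = x j → i = j := by
    have key : ∀ i j, i < j → j < m → x i ≠ x j := by
      intro i j hij hjm heq
      apply hmin (j - i) (by omega)
      refine ⟨by omega, fun k => x (i + k), ?_, ?_⟩
      · have h1 : i + (j - i) = j := by omega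
        beta_reduce
        rw [h1, Nat.add_zero, heq]
      · intro k hk
        have h1 : i + (k+1) = (i+k)+1 := by omega
        beta_reduce
        rw [h1]
        exact hstep (i+k) (by omega)
    intro i j him hjm heq
    rcases Nat.lt_trichotomy i j with h' | h' | h'
    · exact absurd heq (key i j h' hjm)
    · exact h'
    · exact absurd heq.symm (key j i h' him)
  have hcons : ∀ (O : PartialOrder (Fin d)), (∀ a b, O.lt a b → R a b) →
      ∀ k, k + 2 ≤ m → ¬(O.lt (x k) (x (k+1)) ∧ O.lt (x (k+1)) (x (k+2))) := by
    rintro O hOR k hk ⟨h1, h2⟩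
    apply hmin (m-1) (by omega)
    refine ⟨by omega, fun j => if j ≤ k then x j else x (j+1), ?_, ?_⟩
    · beta_reduce
      rw [if_neg (by omega : ¬ m - 1 ≤ k), if_pos (by omega : 0 ≤ k)]
      rw [show m - 1 + 1 = m from by omega, hxm]
    · intro j hj
      beta_reduce
      rcases Nat.lt_trichotomy j k with h' | h' | h'
      · rw [if_pos (by omega : j ≤ k), if_pos (by omega : j + 1 ≤ k)]
        exact hstep j (by omega)
      · subst h'
        rw [if_pos (le_refl j), if_neg (by omega : ¬ j + 1 ≤ j)]
        exact hOR _ _ (plt_trans O h1 h2)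
      · rw [if_neg (by omega : ¬ j ≤ k), if_neg (by omega : ¬ j + 1 ≤ k)]
        exact hstep (j+1) (by omega)
  have hconsw : ∀ (O : PartialOrder (Fin d)), (∀ a b, O.lt a b → R a b) →
      ¬(O.lt (x (m-1)) (x m) ∧ O.lt (x 0) (x 1)) := by
    rintro O hOR ⟨h1, h2⟩
    apply hmin (m-1) (by omega)
    refine ⟨by omega, fun j => if j = m - 1 then x 1 else x (j+1), ?_, ?_⟩
    · beta_reduce
      rw [if_pos rfl, if_neg (by omega : ¬ (0:ℕ) = m - 1)]
    · intro j hj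
      beta_reduce
      rcases Nat.lt_or_ge j (m-2) with h' | h'
      · rw [if_neg (by omega : ¬ j = m - 1), if_neg (by omega : ¬ j + 1 = m - 1)]
        exact hstep (j+1) (by omega)
      · have hj' : j = m - 2 := by omega
        subst hj'
        rw [if_neg (by omega : ¬ m - 2 = m - 1), if_pos (by omega : m - 2 + 1 = m - 1)]
        rw [show m - 2 + 1 = m - 1 from by omega]
        have h1' : O.lt (x (m-1)) (x 0) := by rwa [hxm] at h1
        exact hOR _ _ (plt_trans O h1' h2)
  have hPQ : ∀ k, k < m → P.lt (x k) (x (k+1)) ∨ Q.lt (x k) (x (k+1)) := fun k hk => hstep k hk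
  set prv : ℕ → ℕ := fun k => if k = 0 then m - 1 else k - 1 with hprvdef
  have hprv_lt : ∀ k, k < m → prv k < m := by
    intro k hk
    by_cases h0 : k = 0 <;> simp only [hprvdef, h0, if_true, if_false, if_pos, if_neg] <;> omega
  have hprv_x : ∀ k, k < m → x (prv k + 1) = x k := by
    intro k hk
    by_cases h0 : k = 0
    · subst h0
      show x ((if (0:ℕ) = 0 then m - 1 else 0 - 1) + 1) = x 0
      rw [if_pos rfl, show m - 1 + 1 = m from by omega, hxm]
    · show x ((if k = 0 then m - 1 else k - 1) + 1) = x k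
      rw [if_neg h0, show k - 1 + 1 = k from by omega]
  have hprv_inj : ∀ k1 k2, k1 < m → k2 < m → prv k1 = prv k2 → k1 = k2 := by
    intro k1 k2 h1 h2 he
    simp only [hprvdef] at he
    split_ifs at he <;> omega
  -- typed predecessor facts
  have hQP : ∀ k, k < m → Q.lt (x k) (x (k+1)) → P.lt (x (prv k)) (x (prv k + 1)) := by
    intro k hk hQk
    rcases hPQ (prv k) (hprv_lt k hk) with hp | hq
    · exact hp
    · exfalso
      by_cases h0 : k = 0
      · subst h0
        apply hconsw Q (fun a b => Or.inr)
        have e1 : prv 0 = m - 1 := by simp [hprvdef]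
        rw [e1] at hq
        rw [show m - 1 + 1 = m from by omega] at hq
        exact ⟨hq, hQk⟩
      · apply hcons Q (fun a b => Or.inr) (k-1) (by omega)
        have e1 : prv k = k - 1 := by simp [hprvdef, h0]
        rw [e1] at hq
        constructor
        · exact hq
        · rw [show k - 1 + 1 = k from by omega, show k - 1 + 2 = k + 1 from by omega]
          exact hQk
  have hPQ' : ∀ k, k < m → P.lt (x k) (x (k+1)) → Q.lt (x (prv k)) (x (prv k + 1)) := by
    intro k hk hPk
    rcases hPQ (prv k) (hprv_lt k hk) with hp | hq
    · exfalso
      by_cases h0 : k = 0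
      · subst h0
        apply hconsw P (fun a b => Or.inl)
        have e1 : prv 0 = m - 1 := by simp [hprvdef]
        rw [e1] at hp
        rw [show m - 1 + 1 = m from by omega] at hp
        exact ⟨hp, hPk⟩
      · apply hcons P (fun a b => Or.inl) (k-1) (by omega)
        have e1 : prv k = k - 1 := by simp [hprvdef, h0]
        rw [e1] at hp
        constructor
        · exact hp
        · rw [show k - 1 + 1 = k from by omega, show k - 1 + 2 = k + 1 from by omega]
          exact hPk
    · exact hq
  have hnotboth : ∀ k, k < m → ¬(P.lt (x k) (x (k+1)) ∧ Q.lt (x k) (x (k+1))) := by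
    rintro k hk ⟨hp, hq⟩
    rcases Nat.lt_or_ge (k+1) m with hk1 | hk1
    · rcases hPQ (k+1) hk1 with hp2 | hq2
      · exact hcons P (fun a b => Or.inl) k (by omega) ⟨hp, hp2⟩
      · exact hcons Q (fun a b => Or.inr) k (by omega) ⟨hq, hq2⟩
    · have hk' : k = m - 1 := by omega
      subst hk'
      rcases hPQ 0 (by omega) with hp2 | hq2
      · refine hconsw P (fun a b => Or.inl) ⟨?_, hp2⟩
        rwa [show m - 1 + 1 = m from by omega] at hp
      · refine hconsw Q (fun a b => Or.inr) ⟨?_, hq2⟩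
        rwa [show m - 1 + 1 = m from by omega] at hq
  -- the linear functional
  set PE : ℕ → Prop := fun k => P.lt (x k) (x (k+1)) with hPEdef
  set c : ℕ → ℝ := fun k => if PE k then 1 else -1 with hcdef
  set φ : (Fin d → ℝ) → ℝ := fun v => ∑ k ∈ Finset.range m, c k * v (x k) with hφdef
  have hlin : IsLinearMap ℝ φ := by
    constructor
    · intro u v
      simp only [hφdef, Pi.add_apply, mul_add, Finset.sum_add_distrib]
    · intro a v
      simp only [hφdef, Pi.smul_apply, smul_eq_mul, Finset.mul_sum]
      exact Finset.sum_congr rfl fun k _ => by ring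
  have hφrho : ∀ I : Set (Fin d),
      φ (rho I) = ∑ k ∈ Finset.range m, c k * (if x k ∈ I then (1:ℝ) else 0) := by
    intro I
    refine Finset.sum_congr rfl fun k _ => ?_
    rw [rho, Set.indicator_apply]
    by_cases h : x k ∈ I <;> simp [h]
  have hχ : ∀ (I : Set (Fin d)) (k : ℕ), (if x k ∈ I then (1:ℝ) else 0) = 0 ∨
      (if x k ∈ I then (1:ℝ) else 0) = 1 := by
    intro I k
    by_cases h : x k ∈ I <;> simp [h]
  have hinjOn : Set.InjOn prv (Finset.range m) := by
    intro a ha b hb he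
    exact hprv_inj a b (Finset.mem_range.mp (Finset.mem_coe.mp ha))
      (Finset.mem_range.mp (Finset.mem_coe.mp hb)) he
  have hPideal : ∀ I : Set (Fin d), IsIdeal P I → 0 ≤ φ (rho I) := by
    intro I hI
    rw [hφrho]
    refine sum_pm_nonneg PE _ (hχ I) prv ?_ hinjOn
    intro k hk hnp h1
    have hk' := Finset.mem_range.mp hk
    have hQk : Q.lt (x k) (x (k+1)) := (hPQ k hk').resolve_left hnp
    have hPprv := hQP k hk' hQk
    refine ⟨Finset.mem_range.mpr (hprv_lt k hk'), hPprv, ?_⟩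
    have hxk : x k ∈ I := by
      by_contra hxk
      simp [hxk] at h1
    have hle : P.le (x (prv k)) (x k) := by
      have h2 := ple_of_lt P hPprv
      rwa [hprv_x k hk'] at h2
    have hmem : x (prv k) ∈ I := hI hxk hle
    simp [hmem]
  have hQideal : ∀ J : Set (Fin d), IsIdeal Q J → φ (rho J) ≤ 0 := by
    intro J hJ
    rw [hφrho]
    have h2 : 0 ≤ ∑ k ∈ Finset.range m,
        (if (¬ PE k) then (1:ℝ) else -1) * (if x k ∈ J then (1:ℝ) else 0) := by
      refine sum_pm_nonneg (fun k => ¬ PE k) _ (hχ J) prv ?_ hinjOn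
      intro k hk hnp h1
      have hk' := Finset.mem_range.mp hk
      have hPk : P.lt (x k) (x (k+1)) := not_not.mp hnp
      have hQprv := hPQ' k hk' hPk
      refine ⟨Finset.mem_range.mpr (hprv_lt k hk'), ?_, ?_⟩
      · exact fun hp => hnotboth (prv k) (hprv_lt k hk') ⟨hp, hQprv⟩
      · have hxk : x k ∈ J := by
          by_contra hxk
          simp [hxk] at h1
        have hle : Q.le (x (prv k)) (x k) := by
          have h3 := ple_of_lt Q hQprv
          rwa [hprv_x k hk'] at h3
        have hmem : x (prv k) ∈ J := hJ hxk hle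
        simp [hmem]
    have h3 : ∑ k ∈ Finset.range m, c k * (if x k ∈ J then (1:ℝ) else 0)
        = - ∑ k ∈ Finset.range m,
            (if (¬ PE k) then (1:ℝ) else -1) * (if x k ∈ J then (1:ℝ) else 0) := by
      rw [← Finset.sum_neg_distrib]
      refine Finset.sum_congr rfl fun k _ => ?_
      by_cases h : PE k <;> by_cases h2 : x k ∈ J <;> simp [hcdef, h, h2]
    rw [h3]
    linarith
  have hOmega : ∀ v ∈ Omega P Q, 0 ≤ φ v := by
    rintro v hv
    rcases hv with (⟨I, hI, -, rfl⟩ | ⟨J, hJ, -, rfl⟩) | hv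
    · exact hPideal I hI
    · have h2 := hQideal J hJ
      have hφneg : φ (- rho J) = - φ (rho J) := by
        simp only [hφdef, Pi.neg_apply, mul_neg, ← Finset.sum_neg_distrib]
      rw [hφneg]
      linarith
    · have hv0 : v = 0 := hv
      subst hv0
      simp [hφdef]
  obtain ⟨k0, hk0m, hk0⟩ : ∃ k0, k0 < m ∧ PE k0 := by
    rcases hPQ 0 (by omega) with hp | hq
    · exact ⟨0, by omega, hp⟩
    · exact ⟨prv 0, hprv_lt 0 (by omega), hQP 0 (by omega) hq⟩
  set w : Fin d → ℝ := fun j => if j = x k0 then 1 else 0 with hwdef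
  have hφw : φ w = 1 := by
    have hz : ∀ k ∈ Finset.range m, k ≠ k0 → c k * w (x k) = 0 := by
      intro k hk hne
      have hxx : ¬ x k = x k0 := fun he => hne (hinj k k0 (Finset.mem_range.mp hk) hk0m he)
      simp [hwdef, hxx]
    show (∑ k ∈ Finset.range m, c k * w (x k)) = 1
    rw [Finset.sum_eq_single k0 hz (fun hk => absurd (Finset.mem_range.mpr hk0m) hk)]
    simp [hwdef, hcdef, hk0]
  intro hint
  have hsub : convexHull ℝ (Omega P Q) ⊆ {v | 0 ≤ φ v} :=
    convexHull_min hOmega (convex_halfSpace_ge hlin 0)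
  obtain ⟨ε, hε, hball⟩ := Metric.mem_nhds_iff.mp (mem_interior_iff_mem_nhds.mp hint)
  set δ : ℝ := ε / (2 * (‖w‖ + 1)) with hδ
  have hwpos : 0 < ‖w‖ + 1 := by positivity
  have hδpos : 0 < δ := by positivity
  have hv : (-δ) • w ∈ Metric.ball (0 : Fin d → ℝ) ε := by
    rw [Metric.mem_ball, dist_zero_right, norm_smul, Real.norm_eq_abs]
    have habs : |(-δ)| = δ := by rw [abs_neg, abs_of_pos hδpos]
    rw [habs]
    have hle : δ * ‖w‖ ≤ δ * (‖w‖ + 1) := by nlinarith [norm_nonneg w]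
    have heq : δ * (‖w‖ + 1) = ε / 2 := by
      rw [hδ]
      field_simp
    nlinarith
  have h0le : 0 ≤ φ ((-δ) • w) := hsub (hball hv)
  rw [hlin.map_smul, hφw, smul_eq_mul, mul_one] at h0le
  linarith


theorem zero_mem_interior_iff_common_linExt {d : ℕ} (P Q : PartialOrder (Fin d)) :
    (0 : Fin d → ℝ) ∈ interior (convexHull ℝ (Omega P Q)) ↔
      ∃ σ : Equiv.Perm (Fin d), IsLinExt P σ ∧ IsLinExt Q σ := by
  constructor
  · intro h0
    by_cases hc : ∃ i : Fin d, Relation.TransGen (fun a b => P.lt a b ∨ Q.lt a b) i i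
    · obtain ⟨i, hi⟩ := hc
      exact absurd h0 (not_mem_interior_of_cycle P Q i hi)
    · push_neg at hc
      exact exists_common_linext P Q hc
  · rintro ⟨σ, h1, h2⟩
    exact mem_interior_of_linext P Q σ h1 h2
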